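/- Let (X, μ) and (Y, ν) be standard Borel spaces with finite Borel measures, N ∈ ℕ, and let a_i : X → ℂ, b_i : Y → ℂ be measurable functions (1 ≤ i ≤ N). Then the set E = {(x,y) ∈ X × Y : Σ_{i=1}^N a_i(x) b_i(y) = 0} can be written as E = S ∪ ⋃_{j∈ℕ} (A_j × B_j), where the A_j ⊆ X and B_j ⊆ Y are measurable sets and S is measurable with (μ × ν)(S) = 0. -/

import Mathlib

open MeasureTheory Set Filter Topology

set_option maxHeartbeats 1000000 in
private lemma zeroSet_aux_decomp {X Y : Type*} [MeasurableSpace X] [MeasurableSpace Y]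
    (μ : Measure X) (ν : Measure Y) [IsFiniteMeasure μ] [IsFiniteMeasure ν]
    {N : ℕ} (a : Fin N → X → ℂ) (b : Fin N → Y → ℂ)
    (ha : ∀ i, Measurable (a i)) (hb : ∀ i, Measurable (b i)) :
    ∀ (d : ℕ) (V : Submodule ℂ (Fin N → ℂ)), Module.finrank ℂ V ≤ d →
    ∀ T : Set Y, MeasurableSet T → (∀ y ∈ T, (fun i => b i y) ∈ V) →
    ∃ (S : Set (X × Y)) (A : ℕ → Set X) (B : ℕ → Set Y),
      MeasurableSet S ∧ (∀ j, MeasurableSet (A j)) ∧ (∀ j, MeasurableSet (B j)) ∧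
      (μ.prod ν) S = 0 ∧
      {p : X × Y | ∑ i, a i p.1 * b i p.2 = 0} ∩ (Set.univ ×ˢ T) = S ∪ ⋃ j, A j ×ˢ B j := by
  have hbbm : Measurable (fun y => (fun i => b i y) : Y → Fin N → ℂ) :=
    measurable_pi_lambda _ hb
  have hWmeas : ∀ W : Submodule ℂ (Fin N → ℂ), MeasurableSet (W : Set (Fin N → ℂ)) :=
    fun W => (Submodule.closed_of_finiteDimensional W).measurableSet
  have hEmeas : MeasurableSet {p : X × Y | ∑ i, a i p.1 * b i p.2 = 0} := by
    have : Measurable fun p : X × Y => ∑ i, a i p.1 * b i p.2 :=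
      Finset.measurable_sum _ fun i _ => ((ha i).comp measurable_fst).mul ((hb i).comp measurable_snd)
    exact measurableSet_eq_fun this measurable_const
  intro d
  induction d with
  | zero =>
    intro V hVrank T hTmeas hTV
    have hV : V = ⊥ := Submodule.finrank_eq_zero.mp (Nat.le_zero.mp hVrank)
    refine ⟨∅, fun _ => univ, fun _ => T, MeasurableSet.empty, fun _ => MeasurableSet.univ,
      fun _ => hTmeas, by simp, ?_⟩
    have hsub : (univ : Set X) ×ˢ T ⊆ {p : X × Y | ∑ i, a i p.1 * b i p.2 = 0} := by
      rintro ⟨x, y⟩ ⟨-, hy⟩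
      have h0 : (fun i => b i y) = 0 := by
        have := hTV y hy
        rw [hV, Submodule.mem_bot] at this
        exact this
      have hbz : ∀ i, b i y = 0 := fun i => congrFun h0 i
      simp [Set.mem_setOf_eq, hbz]
    rw [Set.inter_eq_right.2 hsub]
    rw [Set.empty_union, Set.iUnion_const]
  | succ d IH =>
    intro V hVrank T hTmeas hTV
    by_cases hVd : Module.finrank ℂ V ≤ d
    · exact IH V hVd T hTmeas hTV
    have hVbot : V ≠ ⊥ := by
      intro h
      rw [h] at hVd
      simp [finrank_bot] at hVd
    set bb : Y → (Fin N → ℂ) := fun y i => b i y with hbb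
    -- greedy choice of an almost-maximal proper subspace
    have exW : ∀ s : Set Y, ∃ W : Submodule ℂ (Fin N → ℂ), W < V ∧
        ∀ W' : Submodule ℂ (Fin N → ℂ), W' < V →
          ν (s ∩ bb ⁻¹' W') ≤ 2 * ν (s ∩ bb ⁻¹' W) := by
      intro s
      set m := ⨆ W : {W : Submodule ℂ (Fin N → ℂ) // W < V},
        ν (s ∩ bb ⁻¹' ((W : Submodule ℂ (Fin N → ℂ)) : Set (Fin N → ℂ))) with hm
      by_cases hm0 : m = 0
      · refine ⟨⊥, bot_lt_iff_ne_bot.2 hVbot, fun W' hW' => ?_⟩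
        have h := le_iSup (fun W : {W : Submodule ℂ (Fin N → ℂ) // W < V} =>
          ν (s ∩ bb ⁻¹' ((W : Submodule ℂ (Fin N → ℂ)) : Set (Fin N → ℂ)))) ⟨W', hW'⟩
        rw [← hm, hm0] at h
        exact le_trans h zero_le
      · have hmt : m ≠ ⊤ :=
          ne_top_of_le_ne_top (measure_ne_top ν univ)
            (iSup_le fun W => measure_mono (subset_univ _))
        have hlt := ENNReal.half_lt_self hm0 hmt
        rw [hm, lt_iSup_iff] at hlt
        obtain ⟨⟨W, hWV⟩, hW⟩ := hlt
        refine ⟨W, hWV, fun W' hW' => ?_⟩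
        have h1 : ν (s ∩ bb ⁻¹' W') ≤ m := le_iSup (fun W : {W : Submodule ℂ (Fin N → ℂ) // W < V} =>
          ν (s ∩ bb ⁻¹' ((W : Submodule ℂ (Fin N → ℂ)) : Set (Fin N → ℂ)))) ⟨W', hW'⟩
        refine h1.trans ?_
        calc m = m / 2 + m / 2 := (ENNReal.add_halves m).symm
          _ ≤ ν (s ∩ bb ⁻¹' W) + ν (s ∩ bb ⁻¹' W) := add_le_add hW.le hW.le
          _ = 2 * ν (s ∩ bb ⁻¹' W) := (two_mul _).symm
    choose stepW hstep_lt hstep_bnd using exW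
    -- the decreasing sequence of sets and subspaces
    set Tn : ℕ → Set Y := fun j => (fun s => s \ bb ⁻¹' (stepW s))^[j] T with hTn
    set Wn : ℕ → Submodule ℂ (Fin N → ℂ) := fun j => stepW (Tn j) with hWn
    have hTn0 : Tn 0 = T := rfl
    have hTnsucc : ∀ j, Tn (j + 1) = Tn j \ bb ⁻¹' (Wn j) := by
      intro j
      simp only [hTn, Function.iterate_succ_apply']
      rfl
    have hTnmono : ∀ j, Tn (j + 1) ⊆ Tn j := fun j => by rw [hTnsucc]; exact diff_subset
    have hTnsubT : ∀ j, Tn j ⊆ T := by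
      intro j; induction j with
      | zero => exact subset_rfl
      | succ k ih => exact (hTnmono k).trans ih
    have hTnanti : Antitone Tn := antitone_nat_of_succ_le hTnmono
    have hTnmeas : ∀ j, MeasurableSet (Tn j) := by
      intro j; induction j with
      | zero => exact hTmeas
      | succ k ih => rw [hTnsucc]; exact ih.diff (hbbm (hWmeas (Wn k)))
    set D : ℕ → Set Y := fun j => Tn j ∩ bb ⁻¹' (Wn j) with hD
    have hDmeas : ∀ j, MeasurableSet (D j) := fun j => (hTnmeas j).inter (hbbm (hWmeas (Wn j)))
    have hDdisjAux : ∀ i j, i < j → Disjoint (D i) (D j) := by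
      intro i j hij
      refine Set.disjoint_left.2 fun y hyi hyj => ?_
      have h1 : y ∈ Tn j := hyj.1
      have h2 : Tn j ⊆ Tn (i + 1) := hTnanti hij
      have h3 : y ∈ Tn i \ bb ⁻¹' (Wn i) := by rw [← hTnsucc]; exact h2 h1
      exact h3.2 hyi.2
    have hDdisj : Pairwise (Function.onFun Disjoint D) := by
      intro i j hij
      rcases lt_or_gt_of_ne hij with h | h
      · exact hDdisjAux i j h
      · exact (hDdisjAux j i h).symm
    have htsum : ∑' j, ν (D j) ≠ ⊤ := by
      rw [← measure_iUnion hDdisj hDmeas]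
      exact measure_ne_top ν _
    have htend : Tendsto (fun j => ν (D j)) atTop (𝓝 0) :=
      ENNReal.tendsto_atTop_zero_of_tsum_ne_top htsum
    set Tinf : Set Y := ⋂ j, Tn j with hTinf
    have hTinfmeas : MeasurableSet Tinf := MeasurableSet.iInter hTnmeas
    have hTinfsubT : Tinf ⊆ T := (iInter_subset _ 0).trans hTn0.subset
    -- key property: proper subspaces cut Tinf in null sets
    have hkey : ∀ W' : Submodule ℂ (Fin N → ℂ), W' < V → ν (Tinf ∩ bb ⁻¹' W') = 0 := by
      intro W' hW'
      have h1 : ∀ j, ν (Tinf ∩ bb ⁻¹' W') ≤ 2 * ν (D j) := fun j =>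
        le_trans (measure_mono (inter_subset_inter_left _ (iInter_subset _ j)))
          (hstep_bnd (Tn j) W' hW')
      have h2 : Tendsto (fun j => 2 * ν (D j)) atTop (𝓝 0) := by
        have := ENNReal.Tendsto.const_mul htend (Or.inr (by norm_num : (2 : ENNReal) ≠ ⊤))
        simpa using this
      exact le_antisymm (ge_of_tendsto' h2 h1) zero_le
    -- covering
    have hcover : T = Tinf ∪ ⋃ j, D j := by
      apply Subset.antisymm
      · intro y hy
        by_cases hall : ∀ j, y ∈ Tn j
        · exact Or.inl (mem_iInter.2 hall)
        · push_neg at hall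
          right
          have hex : ∃ j, y ∉ Tn j := hall
          classical
          have hj := Nat.find_spec hex
          have hj0 : Nat.find hex ≠ 0 := by
            intro h
            rw [h, hTn0] at hj
            exact hj hy
          obtain ⟨k, hk⟩ := Nat.exists_eq_succ_of_ne_zero hj0
          have hyk : y ∈ Tn k := by
            by_contra h
            exact Nat.find_min hex (by omega) h
          rw [hk] at hj
          have hyk1 : y ∉ Tn (k + 1) := hj
          rw [hTnsucc] at hyk1
          have hmem : y ∈ bb ⁻¹' (Wn k) := by
            by_contra h
            exact hyk1 ⟨hyk, h⟩
          exact mem_iUnion.2 ⟨k, hyk, hmem⟩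
      · rintro y (hy | hy)
        · exact hTinfsubT hy
        · obtain ⟨j, hj⟩ := mem_iUnion.1 hy
          exact hTnsubT j hj.1
    -- the rectangle over Tinf
    obtain ⟨sV, hspan⟩ := IsNoetherian.noetherian V
    set A : Set X := ⋂ w ∈ (sV : Set (Fin N → ℂ)), {x | ∑ i, a i x * w i = 0} with hA
    have hAmeas : MeasurableSet A := by
      refine MeasurableSet.biInter sV.countable_toSet fun w _ => ?_
      have : Measurable fun x => ∑ i, a i x * w i :=
        Finset.measurable_sum _ fun i _ => (ha i).mul measurable_const
      exact measurableSet_eq_fun this measurable_const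
    have hLx : ∀ x : X, ∀ w : Fin N → ℂ,
        (∑ i : Fin N, a i x • (LinearMap.proj i : (Fin N → ℂ) →ₗ[ℂ] ℂ)) w = ∑ i, a i x * w i := by
      intro x w
      simp [LinearMap.sum_apply, LinearMap.smul_apply, LinearMap.proj_apply, smul_eq_mul]
    have hAperp : ∀ x ∈ A, ∀ w ∈ V, ∑ i, a i x * w i = 0 := by
      intro x hx w hw
      have hker : V ≤ LinearMap.ker (∑ i : Fin N, a i x • (LinearMap.proj i : (Fin N → ℂ) →ₗ[ℂ] ℂ)) := by
        rw [← hspan, Submodule.span_le]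
        intro v hv
        have hxv : ∑ i, a i x * v i = 0 := mem_iInter₂.1 hx v hv
        simp only [SetLike.mem_coe, LinearMap.mem_ker]
        rw [hLx x v]; exact hxv
      have hmem := hker hw
      rw [LinearMap.mem_ker] at hmem
      rw [← hLx x w]; exact hmem
    -- the null part over Tinf
    set Sinf : Set (X × Y) := {p : X × Y | ∑ i, a i p.1 * b i p.2 = 0} ∩ (Aᶜ ×ˢ Tinf) with hSinf
    have hSinfmeas : MeasurableSet Sinf := hEmeas.inter (hAmeas.compl.prod hTinfmeas)
    have hSinfnull : (μ.prod ν) Sinf = 0 := by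
      rw [Measure.prod_apply hSinfmeas]
      have hz : ∀ x, ν (Prod.mk x ⁻¹' Sinf) = 0 := by
        intro x
        by_cases hx : x ∈ A
        · exact measure_mono_null (t := (∅ : Set Y))
            (fun y hy => (hy.2.1 hx).elim) measure_empty
        · obtain ⟨w, hwS, hw0⟩ : ∃ w ∈ (sV : Set (Fin N → ℂ)), ¬ (∑ i, a i x * w i = 0) := by
            by_contra h
            push_neg at h
            exact hx (mem_iInter₂.2 fun w hw => h w hw)
          have hwV : w ∈ V := by rw [← hspan]; exact Submodule.subset_span hwS
          set K : Submodule ℂ (Fin N → ℂ) :=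
            V ⊓ LinearMap.ker (∑ i : Fin N, a i x • (LinearMap.proj i : (Fin N → ℂ) →ₗ[ℂ] ℂ)) with hK
          have hKV : K < V := by
            refine lt_of_le_of_ne inf_le_left fun hEq => ?_
            apply hw0
            have hwK : w ∈ K := hEq.symm ▸ hwV
            have hk2 : w ∈ LinearMap.ker
                (∑ i : Fin N, a i x • (LinearMap.proj i : (Fin N → ℂ) →ₗ[ℂ] ℂ)) :=
              (Submodule.mem_inf.1 hwK).2
            rw [LinearMap.mem_ker] at hk2
            rw [← hLx x w]; exact hk2
          have hsub : Prod.mk x ⁻¹' Sinf ⊆ Tinf ∩ bb ⁻¹' K := by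
            intro y hy
            simp only [hSinf, mem_preimage, mem_inter_iff, mem_prod, mem_compl_iff,
              Set.mem_setOf_eq] at hy
            obtain ⟨hsum, -, hyTinf⟩ := hy
            refine ⟨hyTinf, ?_⟩
            have hbV : bb y ∈ V := hTV y (hTinfsubT hyTinf)
            show bb y ∈ (K : Set (Fin N → ℂ))
            rw [SetLike.mem_coe]
            refine Submodule.mem_inf.2 ⟨hbV, ?_⟩
            rw [LinearMap.mem_ker, hLx x (bb y)]
            exact hsum
          exact measure_mono_null hsub (hkey K hKV)
      simp only [hz]
      exact lintegral_zero
    -- the decomposition over Tinf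
    have hsplitInf : {p : X × Y | ∑ i, a i p.1 * b i p.2 = 0} ∩ ((univ : Set X) ×ˢ Tinf)
        = (A ×ˢ Tinf) ∪ Sinf := by
      ext ⟨x, y⟩
      simp only [mem_inter_iff, mem_prod, mem_univ, true_and, Set.mem_setOf_eq, mem_union,
        hSinf, mem_compl_iff]
      constructor
      · rintro ⟨hsum, hyT⟩
        by_cases hx : x ∈ A
        · exact Or.inl ⟨hx, hyT⟩
        · exact Or.inr ⟨hsum, hx, hyT⟩
      · rintro (⟨hx, hyT⟩ | ⟨hsum, -, hyT⟩)
        · refine ⟨?_, hyT⟩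
          exact hAperp x hx (bb y) (hTV y (hTinfsubT hyT))
        · exact ⟨hsum, hyT⟩
    -- apply the induction hypothesis to each D j
    have hIH : ∀ j, ∃ (S : Set (X × Y)) (A : ℕ → Set X) (B : ℕ → Set Y),
        MeasurableSet S ∧ (∀ k, MeasurableSet (A k)) ∧ (∀ k, MeasurableSet (B k)) ∧
        (μ.prod ν) S = 0 ∧
        {p : X × Y | ∑ i, a i p.1 * b i p.2 = 0} ∩ (Set.univ ×ˢ D j) = S ∪ ⋃ k, A k ×ˢ B k := by
      intro j
      have hrank : Module.finrank ℂ (Wn j) ≤ d := by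
        have hlt : Module.finrank ℂ (Wn j) < Module.finrank ℂ V :=
          Submodule.finrank_lt_finrank_of_lt (hstep_lt (Tn j))
        have hVrank' : Module.finrank ℂ V = d + 1 := le_antisymm hVrank (by omega)
        omega
      exact IH (Wn j) hrank (D j) (hDmeas j) (fun y hy => hy.2)
    choose Sj Aj Bj hSjmeas hAjmeas hBjmeas hSjnull hEj using hIH
    -- assemble
    classical
    set e : ℕ → ℕ × ℕ := fun n => (Denumerable.eqv (ℕ × ℕ)).symm n with he
    have hesurj : Function.Surjective e := (Denumerable.eqv (ℕ × ℕ)).symm.surjective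
    set AA : ℕ × ℕ → Set X := fun p => if p.1 = 0 then A else Aj (p.1 - 1) p.2 with hAA
    set BB : ℕ × ℕ → Set Y := fun p => if p.1 = 0 then Tinf else Bj (p.1 - 1) p.2 with hBB
    refine ⟨Sinf ∪ ⋃ j, Sj j, fun n => AA (e n), fun n => BB (e n),
      hSinfmeas.union (MeasurableSet.iUnion hSjmeas), ?_, ?_, ?_, ?_⟩
    · intro n
      by_cases h : (e n).1 = 0 <;> simp only [hAA, h, if_true, if_false]
      · exact hAmeas
      · exact hAjmeas _ _
    · intro n
      by_cases h : (e n).1 = 0 <;> simp only [hBB, h, if_true, if_false]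
      · exact hTinfmeas
      · exact hBjmeas _ _
    · rw [measure_union_null_iff]
      exact ⟨hSinfnull, measure_iUnion_null hSjnull⟩
    · have hU1 : (⋃ n, AA (e n) ×ˢ BB (e n)) = ⋃ p : ℕ × ℕ, AA p ×ˢ BB p :=
        hesurj.iUnion_comp (fun p => AA p ×ˢ BB p)
      have hU2 : (⋃ p : ℕ × ℕ, AA p ×ˢ BB p) = (A ×ˢ Tinf) ∪ ⋃ j, ⋃ k, Aj j k ×ˢ Bj j k := by
        apply Subset.antisymm
        · rintro q hq
          obtain ⟨⟨i, k⟩, hik⟩ := mem_iUnion.1 hq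
          cases i with
          | zero =>
            left
            simpa only [hAA, hBB, if_true] using hik
          | succ j =>
            right
            refine mem_iUnion.2 ⟨j, mem_iUnion.2 ⟨k, ?_⟩⟩
            simpa only [hAA, hBB, Nat.succ_ne_zero, if_false, Nat.succ_sub_one] using hik
        · rintro q (hq | hq)
          · exact mem_iUnion.2 ⟨(0, 0), by simpa only [hAA, hBB, if_true] using hq⟩
          · obtain ⟨j, hj⟩ := mem_iUnion.1 hq
            obtain ⟨k, hk⟩ := mem_iUnion.1 hj
            exact mem_iUnion.2 ⟨(j + 1, k),
              by simpa only [hAA, hBB, Nat.succ_ne_zero, if_false, Nat.succ_sub_one] using hk⟩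
      have h1 : (univ : Set X) ×ˢ T = ((univ : Set X) ×ˢ Tinf) ∪ ⋃ j, (univ : Set X) ×ˢ D j := by
        rw [hcover, Set.prod_union, Set.prod_iUnion]
      have h2 : {p : X × Y | ∑ i, a i p.1 * b i p.2 = 0} ∩ ((univ : Set X) ×ˢ T)
          = ({p : X × Y | ∑ i, a i p.1 * b i p.2 = 0} ∩ ((univ : Set X) ×ˢ Tinf))
            ∪ ⋃ j, ({p : X × Y | ∑ i, a i p.1 * b i p.2 = 0} ∩ ((univ : Set X) ×ˢ D j)) := by
        rw [h1, Set.inter_union_distrib_left, Set.inter_iUnion]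
      rw [h2, hsplitInf, hU1, hU2]
      have h3 : (⋃ j, ({p : X × Y | ∑ i, a i p.1 * b i p.2 = 0} ∩ ((univ : Set X) ×ˢ D j)))
          = ⋃ j, (Sj j ∪ ⋃ k, Aj j k ×ˢ Bj j k) := iUnion_congr hEj
      rw [h3, iUnion_union_distrib]
      ext p
      simp only [mem_union]
      tauto

/-- The set of zeros of a function of finite length `∑ i, a i x * b i y` on the product of
two standard Borel spaces with finite measures is the union of countably many measurable
rectangles and a `μ × ν`-null set. -/
theorem zeroSet_eq_union_rectangles_union_null
    {X Y : Type*} [MeasurableSpace X] [MeasurableSpace Y]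
    [StandardBorelSpace X] [StandardBorelSpace Y]
    (μ : Measure X) (ν : Measure Y) [IsFiniteMeasure μ] [IsFiniteMeasure ν]
    (N : ℕ) (a : Fin N → X → ℂ) (b : Fin N → Y → ℂ)
    (ha : ∀ i, Measurable (a i)) (hb : ∀ i, Measurable (b i)) :
    ∃ (S : Set (X × Y)) (A : ℕ → Set X) (B : ℕ → Set Y),
      MeasurableSet S ∧ (∀ j, MeasurableSet (A j)) ∧ (∀ j, MeasurableSet (B j)) ∧
      (μ.prod ν) S = 0 ∧
      {p : X × Y | ∑ i, a i p.1 * b i p.2 = 0} = S ∪ ⋃ j, A j ×ˢ B j := by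
  obtain ⟨S, A, B, hS, hA, hB, hnull, heq⟩ :=
    zeroSet_aux_decomp μ ν a b ha hb (Module.finrank ℂ (Fin N → ℂ)) ⊤
      (by rw [finrank_top]) univ MeasurableSet.univ (fun y _ => Submodule.mem_top)
  refine ⟨S, A, B, hS, hA, hB, hnull, ?_⟩
  rw [← heq, Set.univ_prod_univ, Set.inter_univ]
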